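/- For every finite simple graph G = (V,E) with |V| = n ≥ 1 and every positive integer k, there exists a subset E' ⊆ E with |E'| ≤ k·(n−1) such that for every S ⊆ V, |∂S ∩ E'| ≥ min(k, |∂S|). In particular, if G has edge connectivity λ then the spanning subgraph (V, E') has edge connectivity at least min(k, λ). -/

import Mathlib

/-- For a simple graph `G` and a vertex set `S`, `edgeCut G S` is the set of edges of `G`
with exactly one endpoint in `S`. -/
def edgeCut {V : Type*} (G : SimpleGraph V) (S : Set V) : Set (Sym2 V) :=
  {e | e ∈ G.edgeSet ∧ ∃ x ∈ S, ∃ y ∉ S, e = s(x, y)}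

/-- Transfer reachability along a hypothesis on edges. -/
lemma reach_transfer {V : Type*} {H H' : SimpleGraph V}
    (h : ∀ a b, H.Adj a b → H'.Reachable a b) {x y : V} (hr : H.Reachable x y) :
    H'.Reachable x y := by
  obtain ⟨p⟩ := hr
  induction p with
  | nil => exact SimpleGraph.Reachable.refl _
  | cons ha _ ih => exact (h _ _ ha).trans ih

/-- Any finite edge set `E0` contains a sparse subset `F` (a spanning forest worth of edges)
preserving reachability, where the bound on `F` is expressed via connected components. -/
lemma sparse_connector {V : Type*} [Fintype V] (G : SimpleGraph V) :
    ∀ (n : ℕ) (E0 : Set (Sym2 V)), E0.ncard = n → E0 ⊆ G.edgeSet →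
    ∃ F ⊆ E0, F.ncard + Nat.card (SimpleGraph.fromEdgeSet F).ConnectedComponent ≤ Fintype.card V ∧
      ∀ x y : V, (SimpleGraph.fromEdgeSet E0).Reachable x y →
        (SimpleGraph.fromEdgeSet F).Reachable x y := by
  intro n
  induction n with
  | zero =>
    intro E0 hcard _
    rw [Set.ncard_eq_zero E0.toFinite] at hcard
    subst hcard
    refine ⟨∅, le_rfl, ?_, ?_⟩
    · simpa using Nat.card_le_card_of_surjective
        (SimpleGraph.fromEdgeSet (∅ : Set (Sym2 V))).connectedComponentMk
        (Quot.exists_rep ·)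
    · exact fun x y h => h
  | succ n ih =>
    intro E0 hcard hsub
    have hne : E0.Nonempty := by
      rw [← Set.ncard_pos E0.toFinite]; omega
    obtain ⟨e, he⟩ := hne
    obtain ⟨x, y⟩ := e
    have hadj : G.Adj x y := hsub he
    have hxy : x ≠ y := hadj.ne
    have hcard' : (E0 \ {s(x,y)}).ncard = n := by
      rw [Set.ncard_diff_singleton_of_mem he]; omega
    obtain ⟨F', hF'sub, hF'card, hF'reach⟩ := ih (E0 \ {s(x,y)}) hcard' (fun f hf => hsub hf.1)
    by_cases hreach : (SimpleGraph.fromEdgeSet F').Reachable x y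
    · refine ⟨F', fun f hf => (hF'sub hf).1, hF'card, ?_⟩
      intro a b hab
      refine reach_transfer (fun a b hab => ?_) hab
      rw [SimpleGraph.fromEdgeSet_adj] at hab
      by_cases hE : s(a,b) = s(x,y)
      · rw [Sym2.eq_iff] at hE
        rcases hE with ⟨rfl, rfl⟩ | ⟨rfl, rfl⟩
        · exact hreach
        · exact hreach.symm
      · exact hF'reach a b (SimpleGraph.Adj.reachable
          (by rw [SimpleGraph.fromEdgeSet_adj]; exact ⟨⟨hab.1, hE⟩, hab.2⟩))
    · refine ⟨insert s(x,y) F', ?_, ?_, ?_⟩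
      · intro f hf
        rcases hf with rfl | hf
        · exact he
        · exact (hF'sub hf).1
      · have hlt : Nat.card (SimpleGraph.fromEdgeSet (insert s(x,y) F')).ConnectedComponent <
            Nat.card (SimpleGraph.fromEdgeSet F').ConnectedComponent := by
          haveI : Fintype (SimpleGraph.fromEdgeSet F').ConnectedComponent := Fintype.ofFinite _
          haveI : Fintype (SimpleGraph.fromEdgeSet (insert s(x,y) F')).ConnectedComponent :=
            Fintype.ofFinite _
          rw [Nat.card_eq_fintype_card, Nat.card_eq_fintype_card]
          have hle : SimpleGraph.fromEdgeSet F' ≤ SimpleGraph.fromEdgeSet (insert s(x,y) F') :=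
            SimpleGraph.fromEdgeSet_mono (Set.subset_insert _ _)
          refine Fintype.card_lt_of_surjective_not_injective
            (SimpleGraph.ConnectedComponent.map (SimpleGraph.Hom.ofLE hle)) ?_ ?_
          · intro c
            obtain ⟨v, rfl⟩ := c.exists_rep
            exact ⟨SimpleGraph.connectedComponentMk _ v, rfl⟩
          · intro hinj
            apply hreach
            have hadj2 : (SimpleGraph.fromEdgeSet (insert s(x,y) F')).Adj x y := by
              rw [SimpleGraph.fromEdgeSet_adj]
              exact ⟨Set.mem_insert _ _, hxy⟩
            have := hinj (a₁ := SimpleGraph.connectedComponentMk _ x)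
              (a₂ := SimpleGraph.connectedComponentMk _ y)
              (by simpa [SimpleGraph.ConnectedComponent.map_mk,
                SimpleGraph.ConnectedComponent.eq] using hadj2.reachable)
            rwa [SimpleGraph.ConnectedComponent.eq] at this
        have h1 : (insert s(x,y) F').ncard ≤ F'.ncard + 1 :=
          Set.ncard_insert_le _ _
        omega
      · intro a b hab
        refine reach_transfer (fun a b hab => ?_) hab
        rw [SimpleGraph.fromEdgeSet_adj] at hab
        by_cases hE : s(a,b) = s(x,y)
        · exact SimpleGraph.Adj.reachable
            (by rw [SimpleGraph.fromEdgeSet_adj]; exact ⟨hE ▸ Set.mem_insert _ _, hab.2⟩)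
        · refine (hF'reach a b (SimpleGraph.Adj.reachable
            (by rw [SimpleGraph.fromEdgeSet_adj]; exact ⟨⟨hab.1, hE⟩, hab.2⟩))).mono
            (SimpleGraph.fromEdgeSet_mono (Set.subset_insert _ _))

/-- Iterating `sparse_connector` `i` times gives the certificate for parameter `i`. -/
lemma certificate_iter {V : Type*} [Fintype V] (G : SimpleGraph V)
    (hn : 1 ≤ Fintype.card V) (i : ℕ) :
    ∃ E' ⊆ G.edgeSet, E'.ncard ≤ i * (Fintype.card V - 1) ∧
      ∀ S : Set V, min i (edgeCut G S).ncard ≤ (edgeCut G S ∩ E').ncard := by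
  induction i with
  | zero => exact ⟨∅, Set.empty_subset _, by simp, fun S => by simp⟩
  | succ i ih =>
    obtain ⟨E', hsub, hcard, hcut⟩ := ih
    obtain ⟨F, hFsub, hFcard, hFreach⟩ :=
      sparse_connector G (G.edgeSet \ E').ncard (G.edgeSet \ E') rfl Set.diff_subset
    have hVne : Nonempty V := Fintype.card_pos_iff.mp hn
    have hCCpos : 0 < Nat.card (SimpleGraph.fromEdgeSet F).ConnectedComponent := by
      have : Nonempty (SimpleGraph.fromEdgeSet F).ConnectedComponent :=
        ⟨SimpleGraph.connectedComponentMk _ (Classical.arbitrary V)⟩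
      exact Nat.card_pos
    have hFn : F.ncard ≤ Fintype.card V - 1 := by omega
    refine ⟨E' ∪ F, ?_, ?_, ?_⟩
    · exact Set.union_subset hsub (hFsub.trans Set.diff_subset)
    · calc (E' ∪ F).ncard ≤ E'.ncard + F.ncard := Set.ncard_union_le _ _
        _ ≤ (i + 1) * (Fintype.card V - 1) := by rw [add_mul, one_mul]; omega
    · intro S
      by_cases hC : edgeCut G S ⊆ E' ∪ F
      · rw [Set.inter_eq_left.mpr hC]
        exact min_le_right _ _
      · obtain ⟨e, heC, heE⟩ := Set.not_subset.mp hC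
        obtain ⟨heG, x, hxS, y, hyS, rfl⟩ := heC
        have hadj : G.Adj x y := heG
        have hadj0 : (SimpleGraph.fromEdgeSet (G.edgeSet \ E')).Adj x y := by
          rw [SimpleGraph.fromEdgeSet_adj]
          exact ⟨⟨heG, fun h => heE (Or.inl h)⟩, hadj.ne⟩
        obtain ⟨p⟩ := hFreach x y hadj0.reachable
        obtain ⟨d, _, hd1, hd2⟩ := p.exists_boundary_dart S hxS hyS
        set f := s(d.fst, d.snd) with hf
        have hfF : f ∈ F := by
          have := d.adj
          rw [SimpleGraph.fromEdgeSet_adj] at this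
          exact this.1
        have hfG : f ∈ G.edgeSet \ E' := hFsub hfF
        have hfC : f ∈ edgeCut G S := ⟨hfG.1, d.fst, hd1, d.snd, hd2, rfl⟩
        have hnotmem : f ∉ edgeCut G S ∩ E' := fun h => hfG.2 h.2
        have hins : insert f (edgeCut G S ∩ E') ⊆ edgeCut G S ∩ (E' ∪ F) := by
          intro g hg
          rcases hg with rfl | hg
          · exact ⟨hfC, Or.inr hfF⟩
          · exact ⟨hg.1, Or.inl hg.2⟩
        have h1 : (edgeCut G S ∩ E').ncard + 1 ≤ (edgeCut G S ∩ (E' ∪ F)).ncard := by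
          rw [← Set.ncard_insert_of_notMem hnotmem (Set.toFinite _)]
          exact Set.ncard_le_ncard hins (Set.toFinite _)
        have h2 : min (i + 1) (edgeCut G S).ncard ≤ min i (edgeCut G S).ncard + 1 := by
          simp only [Nat.min_def]; split <;> split <;> omega
        have := hcut S
        omega

/-- The cut of `fromEdgeSet E'` agrees with `edgeCut G S ∩ E'` when `E' ⊆ G.edgeSet`. -/
lemma edgeCut_fromEdgeSet {V : Type*} (G : SimpleGraph V) {E' : Set (Sym2 V)}
    (hsub : E' ⊆ G.edgeSet) (S : Set V) :
    edgeCut (SimpleGraph.fromEdgeSet E') S = edgeCut G S ∩ E' := by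
  ext e
  constructor
  · rintro ⟨heE, x, hx, y, hy, rfl⟩
    rw [SimpleGraph.edgeSet_fromEdgeSet] at heE
    exact ⟨⟨hsub heE.1, x, hx, y, hy, rfl⟩, heE.1⟩
  · rintro ⟨⟨heG, x, hx, y, hy, rfl⟩, heE'⟩
    refine ⟨?_, x, hx, y, hy, rfl⟩
    rw [SimpleGraph.edgeSet_fromEdgeSet]
    exact ⟨heE', G.not_isDiag_of_mem_edgeSet heG⟩

/-- For every finite simple graph `G = (V,E)` with `n = |V| ≥ 1` and every
positive integer `k`, there is `E' ⊆ E` with `|E'| ≤ k(n−1)` such that every cut satisfies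
`|∂S ∩ E'| ≥ min(k, |∂S|)`. In particular, if `G` has edge connectivity `λ` (the minimum of
`|∂S|` over nontrivial `S`), then the spanning subgraph `(V, E')` has edge connectivity at
least `min(k, λ)`. -/
theorem connectivity_certificate_exists {V : Type*} [Fintype V] (G : SimpleGraph V)
    (hn : 1 ≤ Fintype.card V) (k : ℕ) (hk : 0 < k) :
    ∃ E' ⊆ G.edgeSet, E'.ncard ≤ k * (Fintype.card V - 1) ∧
      (∀ S : Set V, min k (edgeCut G S).ncard ≤ (edgeCut G S ∩ E').ncard) ∧
      (∀ S : Set V, S.Nonempty → S ≠ Set.univ →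
        min k (sInf {m : ℕ | ∃ T : Set V, T.Nonempty ∧ T ≠ Set.univ ∧
            m = (edgeCut G T).ncard})
          ≤ (edgeCut (SimpleGraph.fromEdgeSet E') S).ncard) := by
  obtain ⟨E', hsub, hcard, hcut⟩ := certificate_iter G hn k
  refine ⟨E', hsub, hcard, hcut, ?_⟩
  intro S hS hSu
  have hmem : (edgeCut G S).ncard ∈ {m : ℕ | ∃ T : Set V, T.Nonempty ∧ T ≠ Set.univ ∧
      m = (edgeCut G T).ncard} := ⟨S, hS, hSu, rfl⟩
  calc min k (sInf {m : ℕ | ∃ T : Set V, T.Nonempty ∧ T ≠ Set.univ ∧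
          m = (edgeCut G T).ncard})
      ≤ min k (edgeCut G S).ncard := min_le_min le_rfl (Nat.sInf_le hmem)
    _ ≤ (edgeCut G S ∩ E').ncard := hcut S
    _ = (edgeCut (SimpleGraph.fromEdgeSet E') S).ncard := by
        rw [edgeCut_fromEdgeSet G hsub]
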